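/- arXiv:2112.07949 — 2 statements merged into one kernel-verified Lean document; each statement's English description precedes it below -/
import Mathlib

section
/- Solutions of the angular sub-problem decay exponentially: if f : ℝ → L²(Ω × S²) is differentiable with f'(t) = −A(f(t)) for all t, where A is the bounded linear operator on L²(Ω × S²) induced by the removal operator K_σ, then for every t ≥ 0, ‖f(t)‖ ≤ e^{−σ̲_a t} ‖f(0)‖, where ‖·‖ denotes the L² norm on Ω × S². -/
open MeasureTheory Metric Real
open scoped ENNReal RealInnerProductSpace

noncomputable section

/-- The ambient Euclidean space `ℝ³`. -/
abbrev E3 := EuclideanSpace ℝ (Fin 3)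

/-- The unit sphere `S² ⊆ ℝ³`. -/
abbrev S2 := Metric.sphere (0 : E3) 1

/-- The surface measure on the unit sphere `S²`. -/
def sphereMeasure : Measure S2 := (volume : Measure E3).toSphere

/-- The scattering operator `(Kv)(x,s) = ∫_{S²} Φ(s,s') v(x,s') dσ(s')`. -/
def scatK (Φ : S2 → S2 → ℝ) (v : E3 × S2 → ℝ) : E3 × S2 → ℝ :=
  fun p => ∫ s', Φ p.2 s' * v (p.1, s') ∂sphereMeasure

/-- The product measure on `Ω × S²` (Lebesgue measure restricted to `Ω` times the
surface measure on `S²`). -/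
def rteMeasure (Ω : Set E3) : Measure (E3 × S2) :=
  ((volume : Measure E3).restrict Ω).prod sphereMeasure

/-- The removal operator `(K_σ v)(x,s) = σ_a(x) v(x,s) + σ_s(x) (v(x,s) - (Kv)(x,s))`. -/
def removalK (Φ : S2 → S2 → ℝ) (σa σs : E3 → ℝ) (v : E3 × S2 → ℝ) : E3 × S2 → ℝ :=
  fun p => σa p.1 * v p + σs p.1 * (v p - scatK Φ v p)

open scoped NNReal

instance : IsFiniteMeasure sphereMeasure := by unfold sphereMeasure; infer_instance

/-- AM-GM in `ℝ≥0∞`. -/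
lemma enn_amgm (a b : ℝ≥0∞) : 2 * (a * b) ≤ a ^ 2 + b ^ 2 := by
  rcases eq_or_ne a ⊤ with rfl | ha
  · rcases eq_or_ne b 0 with rfl | hb
    · simp
    · simp [ENNReal.top_pow]
  rcases eq_or_ne b ⊤ with rfl | hb
  · rcases eq_or_ne a 0 with rfl | ha0
    · simp
    · simp [ENNReal.top_pow]
  lift a to ℝ≥0 using ha
  lift b to ℝ≥0 using hb
  have h2 : ((2 * (a * b) : ℝ≥0) : ℝ) ≤ ((a ^ 2 + b ^ 2 : ℝ≥0) : ℝ) := by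
    push_cast; nlinarith [two_mul_le_add_sq (a : ℝ) (b : ℝ)]
  have h : (2 * (a * b) : ℝ≥0) ≤ (a ^ 2 + b ^ 2 : ℝ≥0) := by exact_mod_cast h2
  exact_mod_cast h

/-- Cauchy–Schwarz with a probability weight, in `ℝ≥0∞`. -/
lemma holder_pt {β : Type*} [MeasurableSpace β] {ν : Measure β}
    (φ h : β → ℝ≥0∞) (hφ : Measurable φ) (hh : Measurable h)
    (hφ1 : ∫⁻ s, φ s ∂ν = 1) :
    (∫⁻ s, φ s * h s ∂ν) ≤ (∫⁻ s, φ s * h s ^ 2 ∂ν) ^ (1/2 : ℝ) := by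
  have hpq : Real.HolderConjugate 2 2 := Real.HolderConjugate.two_two
  have hmf : Measurable fun s => φ s ^ (1/2 : ℝ) := hφ.pow_const _
  have key := ENNReal.lintegral_mul_le_Lp_mul_Lq ν hpq
    (f := fun s => φ s ^ (1/2 : ℝ)) (g := fun s => φ s ^ (1/2 : ℝ) * h s)
    hmf.aemeasurable (hmf.mul hh).aemeasurable
  have e1 : ∀ s : β, φ s ^ (1/2 : ℝ) * (φ s ^ (1/2 : ℝ) * h s) = φ s * h s := by
    intro s
    rw [← mul_assoc, ← ENNReal.rpow_add_of_nonneg _ _ (by norm_num) (by norm_num)]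
    norm_num
  have e2 : ∀ s : β, (φ s ^ (1/2 : ℝ)) ^ (2 : ℝ) = φ s := by
    intro s
    rw [← ENNReal.rpow_mul]
    norm_num
  have e3 : ∀ s : β, (φ s ^ (1/2 : ℝ) * h s) ^ (2 : ℝ) = φ s * h s ^ 2 := by
    intro s
    rw [ENNReal.mul_rpow_of_nonneg _ _ (by norm_num : (0:ℝ) ≤ 2), e2 s,
      show (2:ℝ) = ((2:ℕ):ℝ) by norm_num, ENNReal.rpow_natCast]
  calc (∫⁻ s, φ s * h s ∂ν)
      = ∫⁻ s, (fun s => φ s ^ (1/2 : ℝ)) s * ((fun s => φ s ^ (1/2 : ℝ) * h s)) s ∂ν := by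
        simp only [e1]
    _ ≤ (∫⁻ s, (φ s ^ (1/2 : ℝ)) ^ (2:ℝ) ∂ν) ^ (1/2 : ℝ) *
        (∫⁻ s, (φ s ^ (1/2 : ℝ) * h s) ^ (2:ℝ) ∂ν) ^ (1/2 : ℝ) := by
        simpa using key
    _ = (∫⁻ s, φ s * h s ^ 2 ∂ν) ^ (1/2 : ℝ) := by
        simp only [e2, e3, hφ1]
        rw [ENNReal.one_rpow, one_mul]

/-- Lifting an a.e. property of the first coordinate to a product measure. -/
lemma ae_prod_fst {α β : Type*} [MeasurableSpace α] [MeasurableSpace β]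
    {μ : Measure α} {ν : Measure β} [SFinite μ] [SFinite ν] {P : α → Prop}
    (h : ∀ᵐ x ∂μ, P x) : ∀ᵐ p ∂μ.prod ν, P p.1 := by
  have h1 : ∀ᵐ x ∂((ν Set.univ) • μ), P x := Measure.ae_smul_measure h _
  rw [← Measure.map_fst_prod] at h1
  exact ae_of_ae_map measurable_fst.aemeasurable h1

set_option maxHeartbeats 1000000 in
/-- Coercivity of the removal operator. -/
lemma removalK_coercive (Ω : Set E3) (Φ : S2 → S2 → ℝ)
    (hΦmeas : Measurable (Function.uncurry Φ))
    (hΦpos : ∀ s s', 0 ≤ Φ s s')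
    (hΦsymm : ∀ s s', Φ s s' = Φ s' s)
    (hΦnorm : ∀ s, (∫ s', Φ s s' ∂sphereMeasure) = 1)
    (σa σs : E3 → ℝ) (hσa_meas : Measurable σa) (hσs_meas : Measurable σs)
    (σa_lo σa_hi σs_hi : ℝ) (hσs_hi_pos : 0 < σs_hi)
    (hσs_bound : ∀ᵐ x ∂(volume : Measure E3).restrict Ω, 0 ≤ σs x ∧ σs x ≤ σs_hi)
    (hσa_bound : ∀ᵐ x ∂(volume : Measure E3).restrict Ω, σa_lo ≤ σa x ∧ σa x ≤ σa_hi)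
    (u : E3 × S2 → ℝ) (hu_sm : StronglyMeasurable u) (hu_mem : MemLp u 2 (rteMeasure Ω)) :
    σa_lo * (∫ p, u p ^ 2 ∂(rteMeasure Ω)) ≤
      ∫ p, removalK Φ σa σs u p * u p ∂(rteMeasure Ω) := by
  classical
  set ρ : Measure E3 := (volume : Measure E3).restrict Ω with hρdef
  set ν : Measure S2 := sphereMeasure with hνdef
  have hμdef : rteMeasure Ω = ρ.prod ν := rfl
  set μ : Measure (E3 × S2) := rteMeasure Ω with hμ
  have hu2_int : Integrable (fun p => u p ^ 2) μ := hu_mem.integrable_sq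
  -- clamped coefficients
  set sa : E3 → ℝ := fun x => max σa_lo (min (σa x) σa_hi) with hsadef
  set ss : E3 → ℝ := fun x => max 0 (min (σs x) σs_hi) with hssdef
  have hsa_m : Measurable sa := measurable_const.max (hσa_meas.min measurable_const)
  have hss_m : Measurable ss := measurable_const.max (hσs_meas.min measurable_const)
  have hsa_lo : ∀ x, σa_lo ≤ sa x := fun x => le_max_left _ _
  have hsa_hi : ∀ x, sa x ≤ max σa_lo σa_hi := fun x => max_le_max le_rfl (min_le_right _ _)
  have hss0 : ∀ x, 0 ≤ ss x := fun x => le_max_left _ _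
  have hss_hi : ∀ x, ss x ≤ σs_hi := fun x => max_le hσs_hi_pos.le (min_le_right _ _)
  have hsa_ae : ∀ᵐ x ∂ρ, sa x = σa x := by
    filter_upwards [hσa_bound] with x hx
    simp [hsadef, min_eq_left hx.2, max_eq_right hx.1]
  have hss_ae : ∀ᵐ x ∂ρ, ss x = σs x := by
    filter_upwards [hσs_bound] with x hx
    simp [hssdef, min_eq_left hx.2, max_eq_right hx.1]
  have hsa_ae' : ∀ᵐ p ∂μ, sa p.1 = σa p.1 := ae_prod_fst hsa_ae
  have hss_ae' : ∀ᵐ p ∂μ, ss p.1 = σs p.1 := ae_prod_fst hss_ae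
  -- the scattering term
  set Kv : E3 × S2 → ℝ := scatK Φ u with hKvdef
  have hKv_sm : StronglyMeasurable Kv := by
    have hF_sm : StronglyMeasurable
        (fun q : (E3 × S2) × S2 => Φ q.1.2 q.2 * u (q.1.1, q.2)) := by
      apply StronglyMeasurable.mul
      · exact (hΦmeas.comp ((measurable_snd.comp measurable_fst).prodMk
          measurable_snd)).stronglyMeasurable
      · exact hu_sm.comp_measurable
          ((measurable_fst.comp measurable_fst).prodMk measurable_snd)
    exact hF_sm.integral_prod_right'
  have hΦm1 : ∀ s : S2, Measurable (fun s' => Φ s s') :=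
    fun s => hΦmeas.comp (measurable_prodMk_left)
  have hΦint : ∀ s, Integrable (fun s' => Φ s s') ν := by
    intro s
    by_contra h
    have h1 := hΦnorm s
    rw [integral_undef h] at h1
    norm_num at h1
  have hΦlint : ∀ s, ∫⁻ s', ENNReal.ofReal (Φ s s') ∂ν = 1 := by
    intro s
    rw [← ofReal_integral_eq_lintegral_ofReal (hΦint s)
      (Filter.Eventually.of_forall (hΦpos s)), hΦnorm s, ENNReal.ofReal_one]
  -- ENNReal versions
  set w : E3 × S2 → ℝ≥0∞ := fun p => (‖u p‖₊ : ℝ≥0∞) with hwdef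
  have hw_m : Measurable w := hu_sm.measurable.nnnorm.coe_nnreal_ennreal
  set Q : E3 × S2 → ℝ≥0∞ :=
    fun p => ∫⁻ s', ENNReal.ofReal (Φ p.2 s') * w (p.1, s') ^ 2 ∂ν with hQdef
  have hQ_m : Measurable Q := by
    apply Measurable.lintegral_prod_right'
      (f := fun q : (E3 × S2) × S2 => ENNReal.ofReal (Φ q.1.2 q.2) * w (q.1.1, q.2) ^ 2)
    refine Measurable.mul (f := fun q : (E3 × S2) × S2 => ENNReal.ofReal (Φ q.1.2 q.2))
      (g := fun q : (E3 × S2) × S2 => w (q.1.1, q.2) ^ 2) ?_ ?_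
    · exact (ENNReal.measurable_ofReal.comp (hΦmeas.comp
        ((measurable_snd.comp measurable_fst).prodMk measurable_snd)))
    · exact (hw_m.comp ((measurable_fst.comp measurable_fst).prodMk measurable_snd)).pow_const 2
  -- pointwise Cauchy-Schwarz bound
  have hKv_pt : ∀ p : E3 × S2, (‖Kv p‖₊ : ℝ≥0∞) ^ 2 ≤ Q p := by
    intro p
    have h1 : (‖Kv p‖₊ : ℝ≥0∞) ≤ ∫⁻ s', ENNReal.ofReal (Φ p.2 s') * w (p.1, s') ∂ν := by
      refine le_trans (enorm_integral_le_lintegral_enorm _) (le_of_eq ?_)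
      congr 1
      funext s'
      show ‖_‖ₑ = ENNReal.ofReal _ * ‖u _‖ₑ
      rw [enorm_mul, Real.enorm_eq_ofReal (hΦpos _ _)]
    have h2 : (∫⁻ s', ENNReal.ofReal (Φ p.2 s') * w (p.1, s') ∂ν) ≤ Q p ^ (1/2 : ℝ) :=
      holder_pt _ _ (ENNReal.measurable_ofReal.comp (hΦm1 p.2))
        (hw_m.comp (measurable_prodMk_left)) (hΦlint p.2)
    calc (‖Kv p‖₊ : ℝ≥0∞) ^ 2 ≤ (Q p ^ (1/2 : ℝ)) ^ 2 := pow_le_pow_left₀ (by positivity) (h1.trans h2) 2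
      _ = Q p := by
        rw [← ENNReal.rpow_natCast (Q p ^ (1/2:ℝ)) 2, ← ENNReal.rpow_mul]
        norm_num
  -- ENNReal-weighted scattering coefficient
  set σt : E3 → ℝ≥0∞ := fun x => ENNReal.ofReal (ss x) with hσtdef
  have hσt_m : Measurable σt := ENNReal.measurable_ofReal.comp hss_m
  have hσt_ne_top : ∀ x, σt x ≠ ⊤ := fun x => ENNReal.ofReal_ne_top
  have hσt_le : ∀ x, σt x ≤ ENNReal.ofReal σs_hi :=
    fun x => ENNReal.ofReal_le_ofReal (hss_hi x)
  -- Tonelli identity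
  have hf2_m : Measurable (fun p : E3 × S2 => σt p.1 * w p ^ 2) :=
    (hσt_m.comp measurable_fst).mul (hw_m.pow_const 2)
  have LQ_eq : ∫⁻ p, σt p.1 * Q p ∂μ = ∫⁻ p, σt p.1 * w p ^ 2 ∂μ := by
    have hf1_m : Measurable (fun p : E3 × S2 => σt p.1 * Q p) :=
      (hσt_m.comp measurable_fst).mul hQ_m
    rw [hμdef, lintegral_prod _ hf1_m.aemeasurable,
      lintegral_prod _ hf2_m.aemeasurable]
    congr 1
    funext x
    have hQx : ∫⁻ s, Q (x, s) ∂ν = ∫⁻ s', w (x, s') ^ 2 ∂ν := by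
      have hswap : ∫⁻ s, ∫⁻ s', ENNReal.ofReal (Φ s s') * w (x, s') ^ 2 ∂ν ∂ν
          = ∫⁻ s', ∫⁻ s, ENNReal.ofReal (Φ s s') * w (x, s') ^ 2 ∂ν ∂ν := by
        apply lintegral_lintegral_swap
        apply Measurable.aemeasurable
        exact ((ENNReal.measurable_ofReal.comp (hΦmeas.comp
            (measurable_fst.prodMk measurable_snd))).mul
          (((hw_m.comp (measurable_prodMk_left (x := x))).pow_const 2).comp measurable_snd))
      calc ∫⁻ s, Q (x, s) ∂ν
          = ∫⁻ s, ∫⁻ s', ENNReal.ofReal (Φ s s') * w (x, s') ^ 2 ∂ν ∂ν := rfl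
        _ = ∫⁻ s', ∫⁻ s, ENNReal.ofReal (Φ s s') * w (x, s') ^ 2 ∂ν ∂ν := hswap
        _ = ∫⁻ s', w (x, s') ^ 2 ∂ν := by
            apply lintegral_congr
            intro s'
            rw [lintegral_mul_const' _ _ (ENNReal.pow_ne_top ENNReal.coe_ne_top)]
            simp only [fun s => hΦsymm s s']
            rw [hΦlint s', one_mul]
    rw [lintegral_const_mul' _ _ (hσt_ne_top x), lintegral_const_mul' _ _ (hσt_ne_top x), hQx]
  -- finiteness
  have hw2_eq : ∀ p : E3 × S2, w p ^ 2 = (‖u p ^ 2‖₊ : ℝ≥0∞) := by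
    intro p; rw [nnnorm_pow, ENNReal.coe_pow]
  have hw2_fin : ∫⁻ p, w p ^ 2 ∂μ < ⊤ := by
    simp only [hw2_eq]
    exact hu2_int.2
  have hfin : ∫⁻ p, σt p.1 * w p ^ 2 ∂μ < ⊤ := by
    calc ∫⁻ p, σt p.1 * w p ^ 2 ∂μ ≤ ∫⁻ p, ENNReal.ofReal σs_hi * w p ^ 2 ∂μ :=
          lintegral_mono fun p => mul_le_mul_left (hσt_le _) _
      _ = ENNReal.ofReal σs_hi * ∫⁻ p, w p ^ 2 ∂μ :=
          lintegral_const_mul' _ _ ENNReal.ofReal_ne_top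
      _ < ⊤ := ENNReal.mul_lt_top ENNReal.ofReal_lt_top hw2_fin
  -- the key lintegral bound
  have hKvu_le : ∫⁻ p, σt p.1 * (‖Kv p * u p‖₊ : ℝ≥0∞) ∂μ ≤ ∫⁻ p, σt p.1 * w p ^ 2 ∂μ := by
    have h2 : (2:ℝ≥0∞) * ∫⁻ p, σt p.1 * (‖Kv p * u p‖₊ : ℝ≥0∞) ∂μ ≤
        (2:ℝ≥0∞) * ∫⁻ p, σt p.1 * w p ^ 2 ∂μ := by
      rw [← lintegral_const_mul' (2:ℝ≥0∞) _ (by norm_num)]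
      have hstep : ∀ p : E3 × S2,
          2 * (σt p.1 * (‖Kv p * u p‖₊ : ℝ≥0∞)) ≤ σt p.1 * (Q p + w p ^ 2) := by
        intro p
        have e : (‖Kv p * u p‖₊ : ℝ≥0∞) = (‖Kv p‖₊ : ℝ≥0∞) * w p := by
          rw [nnnorm_mul, ENNReal.coe_mul]
        rw [e, mul_left_comm]
        refine mul_le_mul_right ?_ _
        exact le_trans (enn_amgm _ _) (add_le_add_left (hKv_pt p) _)
      calc ∫⁻ p, 2 * (σt p.1 * (‖Kv p * u p‖₊ : ℝ≥0∞)) ∂μ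
          ≤ ∫⁻ p, σt p.1 * (Q p + w p ^ 2) ∂μ := lintegral_mono hstep
        _ = ∫⁻ p, (σt p.1 * Q p + σt p.1 * w p ^ 2) ∂μ := by
            simp only [mul_add]
        _ = ∫⁻ p, σt p.1 * Q p ∂μ + ∫⁻ p, σt p.1 * w p ^ 2 ∂μ := by
            exact lintegral_add_left ((hσt_m.comp measurable_fst).mul hQ_m) _
        _ = (2:ℝ≥0∞) * ∫⁻ p, σt p.1 * w p ^ 2 ∂μ := by
            rw [LQ_eq, two_mul]
    exact (ENNReal.mul_le_mul_iff_right (by norm_num) (by norm_num)).mp h2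
  -- integrability
  have hKvu_nn : ∀ p : E3 × S2, (‖ss p.1 * (Kv p * u p)‖₊ : ℝ≥0∞)
      = σt p.1 * (‖Kv p * u p‖₊ : ℝ≥0∞) := by
    intro p
    rw [nnnorm_mul, ENNReal.coe_mul, ← enorm_eq_nnnorm (ss p.1), Real.enorm_eq_ofReal (hss0 _)]
  have hKvu_int : Integrable (fun p => ss p.1 * (Kv p * u p)) μ := by
    constructor
    · exact ((hss_m.comp measurable_fst).mul
        (hKv_sm.measurable.mul hu_sm.measurable)).aestronglyMeasurable
    · show ∫⁻ p, (‖ss p.1 * (Kv p * u p)‖₊ : ℝ≥0∞) ∂μ < ⊤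
      simp only [hKvu_nn]
      exact lt_of_le_of_lt hKvu_le hfin
  have hss_u2_int : Integrable (fun p => ss p.1 * u p ^ 2) μ := by
    refine hu2_int.bdd_mul (c := σs_hi) ((hss_m.comp measurable_fst).aestronglyMeasurable) ?_
    refine Filter.Eventually.of_forall fun p => ?_
    rw [Real.norm_eq_abs, abs_of_nonneg (hss0 _)]
    exact hss_hi _
  have hsa_u2_int : Integrable (fun p => sa p.1 * u p ^ 2) μ := by
    refine hu2_int.bdd_mul (c := |σa_lo| + |σa_hi|) ((hsa_m.comp measurable_fst).aestronglyMeasurable)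
      (Filter.Eventually.of_forall fun p => ?_)
    rw [Real.norm_eq_abs, abs_le]
    constructor
    · have h1 := hsa_lo p.1
      have h2 := neg_abs_le σa_lo
      have h3 := abs_nonneg σa_hi
      linarith
    · have h1 := hsa_hi p.1
      have h2 := le_abs_self σa_lo
      have h3 := le_abs_self σa_hi
      have h5 := abs_nonneg σa_lo
      have h6 := abs_nonneg σa_hi
      have h4 : max σa_lo σa_hi ≤ |σa_lo| + |σa_hi| :=
        max_le (by linarith) (by linarith)
      linarith
  -- real comparison for the scattering part
  have hscat_le : ∫ p, ss p.1 * (Kv p * u p) ∂μ ≤ ∫ p, ss p.1 * u p ^ 2 ∂μ := by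
    have h1 : ∫ p, ss p.1 * (Kv p * u p) ∂μ ≤ ∫ p, |ss p.1 * (Kv p * u p)| ∂μ :=
      integral_mono hKvu_int hKvu_int.abs fun p => le_abs_self _
    have h2 : ∫ p, |ss p.1 * (Kv p * u p)| ∂μ
        = (∫⁻ p, σt p.1 * (‖Kv p * u p‖₊ : ℝ≥0∞) ∂μ).toReal := by
      have := integral_norm_eq_lintegral_enorm hKvu_int.1
      simp only [Real.norm_eq_abs] at this
      rw [this]
      congr 1
      exact lintegral_congr hKvu_nn
    have h3 : ∫ p, ss p.1 * u p ^ 2 ∂μ = (∫⁻ p, σt p.1 * w p ^ 2 ∂μ).toReal := by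
      have hnn : (0:E3 × S2 → ℝ) ≤ᵐ[μ] fun p => ss p.1 * u p ^ 2 :=
        Filter.Eventually.of_forall fun p => by
          simpa using mul_nonneg (hss0 p.1) (sq_nonneg (u p))
      have := ofReal_integral_eq_lintegral_ofReal hss_u2_int hnn
      have heq : ∀ p : E3 × S2, ENNReal.ofReal (ss p.1 * u p ^ 2) = σt p.1 * w p ^ 2 := by
        intro p
        rw [ENNReal.ofReal_mul (hss0 _)]
        congr 1
        rw [← sq_abs, ENNReal.ofReal_pow (abs_nonneg _), ← Real.enorm_eq_ofReal_abs, enorm_eq_nnnorm]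
      rw [lintegral_congr heq] at this
      rw [← this, ENNReal.toReal_ofReal]
      exact integral_nonneg fun p => mul_nonneg (hss0 _) (sq_nonneg _)
    have h4 := ENNReal.toReal_mono hfin.ne hKvu_le
    linarith
  -- assemble
  have hsplit : ∀ p : E3 × S2, removalK Φ sa ss u p * u p
      = sa p.1 * u p ^ 2 + (ss p.1 * u p ^ 2 - ss p.1 * (Kv p * u p)) := by
    intro p; simp only [removalK, hKvdef]; ring
  have hTot : ∫ p, removalK Φ sa ss u p * u p ∂μ
      = ∫ p, sa p.1 * u p ^ 2 ∂μ
        + (∫ p, ss p.1 * u p ^ 2 ∂μ - ∫ p, ss p.1 * (Kv p * u p) ∂μ) := by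
    have hsub : Integrable (fun p => ss p.1 * u p ^ 2 - ss p.1 * (Kv p * u p)) μ :=
      hss_u2_int.sub hKvu_int
    simp only [hsplit]
    rw [integral_add hsa_u2_int hsub, integral_sub hss_u2_int hKvu_int]
  have hcong : ∫ p, removalK Φ σa σs u p * u p ∂μ
      = ∫ p, removalK Φ sa ss u p * u p ∂μ := by
    apply integral_congr_ae
    filter_upwards [hsa_ae', hss_ae'] with p h1 h2
    simp only [removalK]
    rw [h1, h2]
  have hlow : σa_lo * ∫ p, u p ^ 2 ∂μ ≤ ∫ p, sa p.1 * u p ^ 2 ∂μ := by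
    rw [← integral_const_mul]
    exact integral_mono (hu2_int.const_mul _) hsa_u2_int
      fun p => mul_le_mul_of_nonneg_right (hsa_lo _) (sq_nonneg _)
  calc σa_lo * ∫ p, u p ^ 2 ∂μ
      ≤ ∫ p, sa p.1 * u p ^ 2 ∂μ := hlow
    _ ≤ ∫ p, sa p.1 * u p ^ 2 ∂μ
        + (∫ p, ss p.1 * u p ^ 2 ∂μ - ∫ p, ss p.1 * (Kv p * u p) ∂μ) := by
        linarith
    _ = ∫ p, removalK Φ sa ss u p * u p ∂μ := hTot.symm
    _ = ∫ p, removalK Φ σa σs u p * u p ∂μ := hcong.symm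

/-- exponential decay for the angular sub-problem: if
`f'(t) = −A (f t)` for all `t`, where `A` is the bounded linear operator on
`L²(Ω × S²)` induced by the removal operator `K_σ`, then
`‖f t‖ ≤ e^{−σ̲_a t} ‖f 0‖` for all `t ≥ 0`. -/
theorem angular_subproblem_decay
    (Ω : Set E3) (hΩo : IsOpen Ω) (hΩb : Bornology.IsBounded Ω)
    (Φ : S2 → S2 → ℝ)
    (hΦmeas : Measurable (Function.uncurry Φ))
    (hΦpos : ∀ s s', 0 ≤ Φ s s')
    (hΦsymm : ∀ s s', Φ s s' = Φ s' s)
    (hΦnorm : ∀ s, (∫ s', Φ s s' ∂sphereMeasure) = 1)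
    (σa σs : E3 → ℝ) (hσa_meas : Measurable σa) (hσs_meas : Measurable σs)
    (σa_lo σa_hi σs_hi : ℝ)
    (hσa_lo_pos : 0 < σa_lo) (hσa_hi_pos : 0 < σa_hi) (hσs_hi_pos : 0 < σs_hi)
    (hσs_bound : ∀ᵐ x ∂(volume : Measure E3).restrict Ω, 0 ≤ σs x ∧ σs x ≤ σs_hi)
    (hσa_bound : ∀ᵐ x ∂(volume : Measure E3).restrict Ω, σa_lo ≤ σa x ∧ σa x ≤ σa_hi)
    (A : Lp ℝ 2 (rteMeasure Ω) →L[ℝ] Lp ℝ 2 (rteMeasure Ω))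
    (hA : ∀ g : Lp ℝ 2 (rteMeasure Ω),
      (A g : E3 × S2 → ℝ) =ᵐ[rteMeasure Ω] removalK Φ σa σs g)
    (f : ℝ → Lp ℝ 2 (rteMeasure Ω))
    (hf : ∀ t : ℝ, HasDerivAt f (-(A (f t))) t) :
    ∀ t : ℝ, 0 ≤ t → ‖f t‖ ≤ Real.exp (-(σa_lo * t)) * ‖f 0‖ := by
  intro t ht
  -- coercivity of A
  have key : ∀ g : Lp ℝ 2 (rteMeasure Ω), σa_lo * ⟪g, g⟫ ≤ ⟪A g, g⟫ := by
    intro g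
    have h1 : ⟪A g, g⟫
        = ∫ p, (A g : E3 × S2 → ℝ) p * (g : E3 × S2 → ℝ) p ∂(rteMeasure Ω) := by
      rw [L2.inner_def]
      simp [RCLike.inner_apply]
      exact integral_congr_ae (Filter.Eventually.of_forall fun a => mul_comm _ _)
    have h2 : ∫ p, (A g : E3 × S2 → ℝ) p * (g : E3 × S2 → ℝ) p ∂(rteMeasure Ω)
        = ∫ p, removalK Φ σa σs (g : E3 × S2 → ℝ) p * (g : E3 × S2 → ℝ) p
            ∂(rteMeasure Ω) := by
      apply integral_congr_ae
      exact (hA g).mul (Filter.EventuallyEq.refl _ _)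
    have h3 : ⟪g, g⟫ = ∫ p, (g : E3 × S2 → ℝ) p ^ 2 ∂(rteMeasure Ω) := by
      rw [L2.inner_def]
      simp only [RCLike.inner_apply, starRingEnd_apply, star_trivial, sq]
    rw [h1, h2, h3]
    exact removalK_coercive Ω Φ hΦmeas hΦpos hΦsymm hΦnorm σa σs hσa_meas hσs_meas
      σa_lo σa_hi σs_hi hσs_hi_pos hσs_bound hσa_bound
      ((g : E3 × S2 → ℝ)) (Lp.stronglyMeasurable g) (Lp.memLp g)
  -- the energy function
  set F : ℝ → ℝ := fun s => Real.exp (2 * σa_lo * s) * ⟪f s, f s⟫ with hFdef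
  have hFd : ∀ s : ℝ, HasDerivAt F
      (Real.exp (2 * σa_lo * s) * (2 * σa_lo) * ⟪f s, f s⟫ +
        Real.exp (2 * σa_lo * s) * (⟪f s, -(A (f s))⟫ + ⟪-(A (f s)), f s⟫)) s := by
    intro s
    have he : HasDerivAt (fun s : ℝ => Real.exp (2 * σa_lo * s))
        (Real.exp (2 * σa_lo * s) * (2 * σa_lo)) s := by
      have h0 : HasDerivAt (fun s : ℝ => 2 * σa_lo * s) (2 * σa_lo) s := by
        simpa using (hasDerivAt_id s).const_mul (2 * σa_lo)
      exact h0.exp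
    have hi : HasDerivAt (fun s : ℝ => ⟪f s, f s⟫)
        (⟪f s, -(A (f s))⟫ + ⟪-(A (f s)), f s⟫) s :=
      HasDerivAt.inner ℝ (hf s) (hf s)
    exact he.mul hi
  have hF' : ∀ s : ℝ, deriv F s ≤ 0 := by
    intro s
    rw [(hFd s).deriv]
    have h1 := key (f s)
    have h2 : ⟪f s, -(A (f s))⟫ = -⟪A (f s), f s⟫ := by
      rw [inner_neg_right, real_inner_comm]
    have h3 : (⟪-(A (f s)), f s⟫ : ℝ) = -⟪A (f s), f s⟫ := inner_neg_left _ _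
    have hE := (Real.exp_pos (2 * σa_lo * s)).le
    rw [h2, h3]
    have h4 : 2 * σa_lo * ⟪f s, f s⟫ - 2 * ⟪A (f s), f s⟫ ≤ 0 := by linarith
    nlinarith [h4, hE]
  have hmono : Antitone F :=
    antitone_of_deriv_nonpos (fun s => (hFd s).differentiableAt) hF'
  have hle : F t ≤ F 0 := hmono ht
  have hFt : Real.exp (2 * σa_lo * t) * ‖f t‖ ^ 2 ≤ ‖f 0‖ ^ 2 := by
    have h0 : F 0 = ⟪f 0, f 0⟫ := by simp [hFdef]
    have := hle
    rw [h0, real_inner_self_eq_norm_sq] at this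
    simpa [hFdef, real_inner_self_eq_norm_sq] using this
  have hE := Real.exp_pos (2 * σa_lo * t)
  have hsq : ‖f t‖ ^ 2 ≤ (Real.exp (-(σa_lo * t)) * ‖f 0‖) ^ 2 := by
    have hrhs : (Real.exp (-(σa_lo * t)) * ‖f 0‖) ^ 2
        = ‖f 0‖ ^ 2 / Real.exp (2 * σa_lo * t) := by
      rw [mul_pow, ← Real.exp_nat_mul]
      rw [div_eq_inv_mul, ← Real.exp_neg]
      ring_nf
    rw [hrhs, le_div_iff₀ hE]
    linarith [hFt]
  calc ‖f t‖ = Real.sqrt (‖f t‖ ^ 2) := by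
        rw [Real.sqrt_sq (norm_nonneg _)]
    _ ≤ Real.sqrt ((Real.exp (-(σa_lo * t)) * ‖f 0‖) ^ 2) := Real.sqrt_le_sqrt hsq
    _ = Real.exp (-(σa_lo * t)) * ‖f 0‖ := by
        rw [Real.sqrt_sq (mul_nonneg (Real.exp_pos _).le (norm_nonneg _))]
end
end

section
/- Energy estimate for the implicit Euler step of the angular sub-problem: if Δt > 0 and ũ, u ∈ L²(Ω × S²) satisfy ũ + Δt K_σ ũ = u, then ‖ũ‖² + ‖ũ − u‖² + 2 Δt σ̲_a ‖ũ‖² ≤ ‖u‖²; in particular ‖ũ‖ ≤ ‖u‖. Here ‖·‖ denotes the L² norm on Ω × S². -/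
open MeasureTheory Metric Real
open scoped ENNReal RealInnerProductSpace

noncomputable section

instance inst_s9 : IsFiniteMeasure sphereMeasure := by unfold sphereMeasure; infer_instance

lemma ae_fst_prod {α β : Type*} [MeasurableSpace α] [MeasurableSpace β]
    {μ : Measure α} {ν : Measure β} [SFinite ν] {P : α → Prop}
    (h : ∀ᵐ x ∂μ, P x) : ∀ᵐ z ∂μ.prod ν, P z.1 :=
  Measure.quasiMeasurePreserving_fst.ae h


lemma integrable_mul_of_memL2 {α : Type*} [MeasurableSpace α] {μ : Measure α} {f g : α → ℝ}
    (hf : MemLp f 2 μ) (hg : MemLp g 2 μ) :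
    Integrable (fun x => f x * g x) μ := by
  refine Integrable.mono' ((hf.integrable_sq.add hg.integrable_sq).div_const 2)
    (hf.1.mul hg.1) (Filter.Eventually.of_forall fun x => ?_)
  simp only [Real.norm_eq_abs, abs_mul, Pi.add_apply]
  nlinarith [sq_nonneg (|f x| - |g x|), sq_abs (f x), sq_abs (g x)]

def swapLast : (E3 × S2) × S2 ≃ᵐ (E3 × S2) × S2 where
  toFun z := ((z.1.1, z.2), z.1.2)
  invFun z := ((z.1.1, z.2), z.1.2)
  left_inv _ := rfl
  right_inv _ := rfl
  measurable_toFun := ((measurable_fst.fst.prodMk measurable_snd).prodMk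
    measurable_fst.snd)
  measurable_invFun := ((measurable_fst.fst.prodMk measurable_snd).prodMk
    measurable_fst.snd)

lemma swapLast_mp (ρ : Measure E3) [SFinite ρ] :
    MeasurePreserving swapLast
      ((ρ.prod sphereMeasure).prod sphereMeasure)
      ((ρ.prod sphereMeasure).prod sphereMeasure) := by
  have h1 := measurePreserving_prodAssoc ρ sphereMeasure sphereMeasure
  have h2 := (MeasurePreserving.id ρ).prod
    (Measure.measurePreserving_swap (μ := sphereMeasure) (ν := sphereMeasure))
  have h3 := (measurePreserving_prodAssoc ρ sphereMeasure sphereMeasure).symm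
    MeasurableEquiv.prodAssoc
  exact h3.comp (h2.comp h1)

lemma phi_integrable (Φ : S2 → S2 → ℝ)
    (hΦnorm : ∀ s, (∫ s', Φ s s' ∂sphereMeasure) = 1) (s : S2) :
    Integrable (Φ s) sphereMeasure := by
  by_contra h
  have := hΦnorm s
  rw [integral_undef h] at this
  norm_num at this

lemma phi_lintegral (Φ : S2 → S2 → ℝ) (hΦpos : ∀ s s', 0 ≤ Φ s s')
    (hΦnorm : ∀ s, (∫ s', Φ s s' ∂sphereMeasure) = 1) (s : S2) :
    ∫⁻ s', ENNReal.ofReal (Φ s s') ∂sphereMeasure = 1 := by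
  rw [← ofReal_integral_eq_lintegral_ofReal (phi_integrable Φ hΦnorm s)
    (Filter.Eventually.of_forall (hΦpos s)), hΦnorm s, ENNReal.ofReal_one]


lemma kernel_ineq (Φ : S2 → S2 → ℝ)
    (hΦmeas : Measurable (Function.uncurry Φ))
    (hΦpos : ∀ s s', 0 ≤ Φ s s')
    (hΦsymm : ∀ s s', Φ s s' = Φ s' s)
    (hΦnorm : ∀ s, (∫ s', Φ s s' ∂sphereMeasure) = 1)
    (ρ : Measure E3) [SFinite ρ]
    (w : E3 → ℝ) (hw_meas : Measurable w) (c : ℝ) (hc : 0 ≤ c)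
    (hw : ∀ᵐ x ∂ρ, 0 ≤ w x ∧ w x ≤ c)
    (f : E3 × S2 → ℝ) (hf : Measurable f)
    (hf2 : MemLp f 2 (ρ.prod sphereMeasure)) :
    (∫ p, w p.1 * (f p * scatK Φ f p) ∂(ρ.prod sphereMeasure)) ≤
      ∫ p, w p.1 * f p ^ 2 ∂(ρ.prod sphereMeasure) := by
  set F : (E3 × S2) × S2 → ℝ :=
    fun z => (w z.1.1 * f z.1) * (Φ z.1.2 z.2 * f (z.1.1, z.2)) with hF
  set G1 : (E3 × S2) × S2 → ℝ :=
    fun z => (w z.1.1 * f z.1 ^ 2) * Φ z.1.2 z.2 with hG1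
  set G2 : (E3 × S2) × S2 → ℝ :=
    fun z => (w z.1.1 * f (z.1.1, z.2) ^ 2) * Φ z.1.2 z.2 with hG2
  -- measurability
  have hmΦ : Measurable fun z : (E3 × S2) × S2 => Φ z.1.2 z.2 :=
    hΦmeas.comp (measurable_fst.snd.prodMk measurable_snd)
  have hmΦs : ∀ s : S2, Measurable fun s' => ENNReal.ofReal (Φ s s') := fun s =>
    (hΦmeas.comp (measurable_const.prodMk measurable_id)).ennreal_ofReal
  have hmf1 : Measurable fun z : (E3 × S2) × S2 => f z.1 := hf.comp measurable_fst
  have hmf2 : Measurable fun z : (E3 × S2) × S2 => f (z.1.1, z.2) :=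
    hf.comp (measurable_fst.fst.prodMk measurable_snd)
  have hmw : Measurable fun z : (E3 × S2) × S2 => w z.1.1 :=
    hw_meas.comp measurable_fst.fst
  have hmF : Measurable F := (hmw.mul hmf1).mul (hmΦ.mul hmf2)
  have hmG1 : Measurable G1 := (hmw.mul (hmf1.pow_const 2)).mul hmΦ
  have hmG2 : Measurable G2 := (hmw.mul (hmf2.pow_const 2)).mul hmΦ
  -- lifted a.e. bound on w
  have hwM : ∀ᵐ z ∂((ρ.prod sphereMeasure).prod sphereMeasure),
      0 ≤ w z.1.1 ∧ w z.1.1 ≤ c := ae_fst_prod (ae_fst_prod hw)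
  -- finiteness of ∫⁻ f²
  have hfin2 : (∫⁻ p, ENNReal.ofReal (f p ^ 2) ∂(ρ.prod sphereMeasure)) < ⊤ := by
    have h := hf2.integrable_sq.hasFiniteIntegral
    rwa [hasFiniteIntegral_iff_ofReal
      (Filter.Eventually.of_forall fun p => sq_nonneg _)] at h
  -- ∫⁻ of the A-part
  have hA_eq : (∫⁻ z, ENNReal.ofReal (Φ z.1.2 z.2) * ENNReal.ofReal (f z.1 ^ 2)
        ∂((ρ.prod sphereMeasure).prod sphereMeasure))
      = ∫⁻ p, ENNReal.ofReal (f p ^ 2) ∂(ρ.prod sphereMeasure) := by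
    rw [lintegral_prod (f := fun z : (E3 × S2) × S2 => ENNReal.ofReal (Φ z.1.2 z.2) * ENNReal.ofReal (f z.1 ^ 2)) (hmΦ.ennreal_ofReal.mul
      (hmf1.pow_const 2).ennreal_ofReal).aemeasurable]
    refine lintegral_congr fun p => ?_
    show (∫⁻ s', ENNReal.ofReal (Φ p.2 s') * ENNReal.ofReal (f p ^ 2) ∂sphereMeasure)
      = ENNReal.ofReal (f p ^ 2)
    rw [lintegral_mul_const'' _ (hmΦs p.2).aemeasurable,
      phi_lintegral Φ hΦpos hΦnorm p.2, one_mul]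
  -- ∫⁻ of the B-part equals the A-part via the swap
  have hB_eq : (∫⁻ z, ENNReal.ofReal (Φ z.1.2 z.2) * ENNReal.ofReal (f (z.1.1, z.2) ^ 2)
        ∂((ρ.prod sphereMeasure).prod sphereMeasure))
      = ∫⁻ z, ENNReal.ofReal (Φ z.1.2 z.2) * ENNReal.ofReal (f z.1 ^ 2)
        ∂((ρ.prod sphereMeasure).prod sphereMeasure) := by
    have hcomp := (swapLast_mp ρ).lintegral_comp
      (f := fun z => ENNReal.ofReal (Φ z.1.2 z.2) * ENNReal.ofReal (f (z.1.1, z.2) ^ 2))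
      (hmΦ.ennreal_ofReal.mul (hmf2.pow_const 2).ennreal_ofReal)
    rw [← hcomp]
    refine lintegral_congr fun z => ?_
    show ENNReal.ofReal (Φ z.2 z.1.2) * ENNReal.ofReal (f (z.1.1, z.1.2) ^ 2) = _
    rw [hΦsymm]
  -- the dominating bound is finite
  have hBnd_fin : (∫⁻ z, ENNReal.ofReal c * (ENNReal.ofReal (Φ z.1.2 z.2) *
        (ENNReal.ofReal (f z.1 ^ 2) + ENNReal.ofReal (f (z.1.1, z.2) ^ 2)))
        ∂((ρ.prod sphereMeasure).prod sphereMeasure)) < ⊤ := by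
    rw [lintegral_const_mul' _ _ ENNReal.ofReal_ne_top]
    have heq : ∀ z : (E3 × S2) × S2, ENNReal.ofReal (Φ z.1.2 z.2) *
        (ENNReal.ofReal (f z.1 ^ 2) + ENNReal.ofReal (f (z.1.1, z.2) ^ 2))
        = ENNReal.ofReal (Φ z.1.2 z.2) * ENNReal.ofReal (f z.1 ^ 2)
          + ENNReal.ofReal (Φ z.1.2 z.2) * ENNReal.ofReal (f (z.1.1, z.2) ^ 2) :=
      fun z => mul_add _ _ _
    rw [lintegral_congr heq, lintegral_add_left (f := fun z : (E3 × S2) × S2 => ENNReal.ofReal (Φ z.1.2 z.2) * ENNReal.ofReal (f z.1 ^ 2)) (hmΦ.ennreal_ofReal.mul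
      (hmf1.pow_const 2).ennreal_ofReal), hA_eq, hB_eq, hA_eq]
    exact ENNReal.mul_lt_top ENNReal.ofReal_lt_top
      (ENNReal.add_lt_top.mpr ⟨hfin2, hfin2⟩)
  -- a generic integrability criterion from the bound
  have hdom : ∀ (H : (E3 × S2) × S2 → ℝ), Measurable H →
      (∀ z, 0 ≤ w z.1.1 ∧ w z.1.1 ≤ c → |H z| ≤
        c * (Φ z.1.2 z.2 * (f z.1 ^ 2 + f (z.1.1, z.2) ^ 2))) →
      Integrable H ((ρ.prod sphereMeasure).prod sphereMeasure) := by
    intro H hHm hHb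
    refine ⟨hHm.aestronglyMeasurable, ?_⟩
    rw [hasFiniteIntegral_iff_norm]
    refine lt_of_le_of_lt (lintegral_mono_ae ?_) hBnd_fin
    filter_upwards [hwM] with z hz
    rw [Real.norm_eq_abs]
    refine le_trans (ENNReal.ofReal_le_ofReal (hHb z hz)) ?_
    rw [ENNReal.ofReal_mul hc, ENNReal.ofReal_mul (hΦpos _ _),
      ENNReal.ofReal_add (sq_nonneg _) (sq_nonneg _)]
  -- integrability of F, G1, G2
  have habs2 : ∀ z : (E3 × S2) × S2, |f z.1 * f (z.1.1, z.2)| ≤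
      f z.1 ^ 2 + f (z.1.1, z.2) ^ 2 := by
    intro z
    rw [abs_mul]
    nlinarith [sq_nonneg (|f z.1| - |f (z.1.1, z.2)|), sq_abs (f z.1),
      sq_abs (f (z.1.1, z.2)), abs_nonneg (f z.1), abs_nonneg (f (z.1.1, z.2)),
      mul_nonneg (abs_nonneg (f z.1)) (abs_nonneg (f (z.1.1, z.2)))]
  have hFint : Integrable F ((ρ.prod sphereMeasure).prod sphereMeasure) := by
    refine hdom F hmF fun z hz => ?_
    have h1 : |F z| = w z.1.1 * Φ z.1.2 z.2 * |f z.1 * f (z.1.1, z.2)| := by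
      simp only [hF]
      rw [show (w z.1.1 * f z.1) * (Φ z.1.2 z.2 * f (z.1.1, z.2))
        = (w z.1.1 * Φ z.1.2 z.2) * (f z.1 * f (z.1.1, z.2)) by ring, abs_mul,
        abs_of_nonneg (mul_nonneg hz.1 (hΦpos _ _))]
    rw [h1]
    calc w z.1.1 * Φ z.1.2 z.2 * |f z.1 * f (z.1.1, z.2)|
        ≤ (c * Φ z.1.2 z.2) * (f z.1 ^ 2 + f (z.1.1, z.2) ^ 2) := by
          refine mul_le_mul (mul_le_mul_of_nonneg_right hz.2 (hΦpos _ _)) (habs2 z)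
            (abs_nonneg _) (mul_nonneg hc (hΦpos _ _))
      _ = c * (Φ z.1.2 z.2 * (f z.1 ^ 2 + f (z.1.1, z.2) ^ 2)) := by ring
  have hG1int : Integrable G1 ((ρ.prod sphereMeasure).prod sphereMeasure) := by
    refine hdom G1 hmG1 fun z hz => ?_
    have h1 : |G1 z| = w z.1.1 * f z.1 ^ 2 * Φ z.1.2 z.2 := by
      simp only [hG1]
      exact abs_of_nonneg (mul_nonneg (mul_nonneg hz.1 (sq_nonneg _)) (hΦpos _ _))
    rw [h1]
    have : w z.1.1 * f z.1 ^ 2 * Φ z.1.2 z.2 ≤ c * f z.1 ^ 2 * Φ z.1.2 z.2 := by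
      refine mul_le_mul_of_nonneg_right
        (mul_le_mul_of_nonneg_right hz.2 (sq_nonneg _)) (hΦpos _ _)
    refine le_trans this ?_
    nlinarith [mul_nonneg (mul_nonneg hc (sq_nonneg (f (z.1.1, z.2)))) (hΦpos z.1.2 z.2)]
  have hG2int : Integrable G2 ((ρ.prod sphereMeasure).prod sphereMeasure) := by
    refine hdom G2 hmG2 fun z hz => ?_
    have h1 : |G2 z| = w z.1.1 * f (z.1.1, z.2) ^ 2 * Φ z.1.2 z.2 := by
      simp only [hG2]
      exact abs_of_nonneg (mul_nonneg (mul_nonneg hz.1 (sq_nonneg _)) (hΦpos _ _))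
    rw [h1]
    have : w z.1.1 * f (z.1.1, z.2) ^ 2 * Φ z.1.2 z.2
        ≤ c * f (z.1.1, z.2) ^ 2 * Φ z.1.2 z.2 := by
      refine mul_le_mul_of_nonneg_right
        (mul_le_mul_of_nonneg_right hz.2 (sq_nonneg _)) (hΦpos _ _)
    refine le_trans this ?_
    nlinarith [mul_nonneg (mul_nonneg hc (sq_nonneg (f z.1))) (hΦpos z.1.2 z.2)]
  -- Fubini identities
  have hF_fub : (∫ z, F z ∂((ρ.prod sphereMeasure).prod sphereMeasure))
      = ∫ p, w p.1 * (f p * scatK Φ f p) ∂(ρ.prod sphereMeasure) := by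
    rw [integral_prod _ hFint]
    refine integral_congr_ae (Filter.Eventually.of_forall fun p => ?_)
    show (∫ s', (w p.1 * f p) * (Φ p.2 s' * f (p.1, s')) ∂sphereMeasure) = _
    rw [integral_const_mul, mul_assoc]
    rfl
  have hG1_fub : (∫ z, G1 z ∂((ρ.prod sphereMeasure).prod sphereMeasure))
      = ∫ p, w p.1 * f p ^ 2 ∂(ρ.prod sphereMeasure) := by
    rw [integral_prod _ hG1int]
    refine integral_congr_ae (Filter.Eventually.of_forall fun p => ?_)
    show (∫ s', (w p.1 * f p ^ 2) * Φ p.2 s' ∂sphereMeasure) = w p.1 * f p ^ 2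
    rw [integral_const_mul, hΦnorm p.2, mul_one]
  have hG2_fub : (∫ z, G2 z ∂((ρ.prod sphereMeasure).prod sphereMeasure))
      = ∫ z, G1 z ∂((ρ.prod sphereMeasure).prod sphereMeasure) := by
    have hcomp := (swapLast_mp ρ).integral_comp' (f := swapLast) G2
    rw [← hcomp]
    refine integral_congr_ae (Filter.Eventually.of_forall fun z => ?_)
    show (w z.1.1 * f (z.1.1, z.1.2) ^ 2) * Φ z.2 z.1.2 = G1 z
    simp only [hG1]
    rw [hΦsymm]
  -- pointwise a.e. bound F ≤ (G1 + G2)/2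
  have hmono : (∫ z, F z ∂((ρ.prod sphereMeasure).prod sphereMeasure))
      ≤ ∫ z, (G1 z + G2 z) / 2 ∂((ρ.prod sphereMeasure).prod sphereMeasure) := by
    refine integral_mono_ae hFint ((hG1int.add hG2int).div_const 2) ?_
    filter_upwards [hwM] with z hz
    simp only [hF, hG1, hG2]
    nlinarith [mul_nonneg hz.1 (hΦpos z.1.2 z.2),
      sq_nonneg (f z.1 - f (z.1.1, z.2)),
      mul_nonneg (mul_nonneg hz.1 (hΦpos z.1.2 z.2))
        (sq_nonneg (f z.1 - f (z.1.1, z.2)))]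
  -- put everything together
  have hsum : (∫ z, (G1 z + G2 z) / 2 ∂((ρ.prod sphereMeasure).prod sphereMeasure))
      = ∫ z, G1 z ∂((ρ.prod sphereMeasure).prod sphereMeasure) := by
    rw [integral_div, integral_add hG1int hG2int, hG2_fub]
    ring
  rw [← hF_fub, ← hG1_fub]
  rw [hsum] at hmono
  exact hmono

/-- energy estimate for the implicit Euler step of the angular
sub-problem: if `ũ + Δt K_σ ũ = u` then
`‖ũ‖² + ‖ũ − u‖² + 2 Δt σ̲_a ‖ũ‖² ≤ ‖u‖²`; in particular `‖ũ‖ ≤ ‖u‖`. -/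
theorem implicitEuler_energy_estimate
    (Ω : Set E3) (hΩo : IsOpen Ω) (hΩb : Bornology.IsBounded Ω)
    (Φ : S2 → S2 → ℝ)
    (hΦmeas : Measurable (Function.uncurry Φ))
    (hΦpos : ∀ s s', 0 ≤ Φ s s')
    (hΦsymm : ∀ s s', Φ s s' = Φ s' s)
    (hΦnorm : ∀ s, (∫ s', Φ s s' ∂sphereMeasure) = 1)
    (σa σs : E3 → ℝ) (hσa_meas : Measurable σa) (hσs_meas : Measurable σs)
    (σa_lo σa_hi σs_hi : ℝ)
    (hσa_lo_pos : 0 < σa_lo) (hσa_hi_pos : 0 < σa_hi) (hσs_hi_pos : 0 < σs_hi)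
    (hσs_bound : ∀ᵐ x ∂(volume : Measure E3).restrict Ω, 0 ≤ σs x ∧ σs x ≤ σs_hi)
    (hσa_bound : ∀ᵐ x ∂(volume : Measure E3).restrict Ω, σa_lo ≤ σa x ∧ σa x ≤ σa_hi)
    (Δt : ℝ) (hΔt : 0 < Δt)
    (util u : E3 × S2 → ℝ)
    (hutil : MemLp util 2 (rteMeasure Ω)) (hu : MemLp u 2 (rteMeasure Ω))
    (heq : ∀ᵐ p ∂(rteMeasure Ω), util p + Δt * removalK Φ σa σs util p = u p) :
    ((∫ p, (util p) ^ 2 ∂(rteMeasure Ω)) + (∫ p, (util p - u p) ^ 2 ∂(rteMeasure Ω)) +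
        2 * Δt * σa_lo * ∫ p, (util p) ^ 2 ∂(rteMeasure Ω) ≤
        ∫ p, (u p) ^ 2 ∂(rteMeasure Ω)) ∧
      eLpNorm util 2 (rteMeasure Ω) ≤ eLpNorm u 2 (rteMeasure Ω) := by
  have hμdef : rteMeasure Ω = ((volume : Measure E3).restrict Ω).prod sphereMeasure := rfl
  -- measurable representative of util
  set f : E3 × S2 → ℝ := hutil.1.mk util with hfdef
  have hf_ae : util =ᵐ[rteMeasure Ω] f := hutil.1.ae_eq_mk
  have hf : Measurable f := hutil.1.stronglyMeasurable_mk.measurable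
  have hf2 : MemLp f 2 (rteMeasure Ω) := hutil.ae_eq hf_ae
  -- the equation for f
  have hscat : ∀ᵐ p ∂(rteMeasure Ω), scatK Φ util p = scatK Φ f p := by
    have h1 : ∀ᵐ x ∂(volume : Measure E3).restrict Ω,
        ∀ᵐ s ∂sphereMeasure, util (x, s) = f (x, s) := by
      rw [hμdef] at hf_ae
      exact Measure.ae_ae_of_ae_prod hf_ae
    have h2 : ∀ᵐ p ∂(rteMeasure Ω),
        ∀ᵐ s' ∂sphereMeasure, util (p.1, s') = f (p.1, s') := by
      rw [hμdef]; exact ae_fst_prod h1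
    filter_upwards [h2] with p hp
    exact integral_congr_ae (hp.mono fun s' hs' => by simp only [hs'])
  have heqf : ∀ᵐ p ∂(rteMeasure Ω), f p + Δt * removalK Φ σa σs f p = u p := by
    filter_upwards [heq, hf_ae, hscat] with p h1 h2 h3
    simp only [removalK] at h1 ⊢
    rw [← h2, ← h3]
    exact h1
  -- lifted σ bounds
  have hsa : ∀ᵐ p ∂(rteMeasure Ω), σa_lo ≤ σa p.1 ∧ σa p.1 ≤ σa_hi := by
    rw [hμdef]; exact ae_fst_prod hσa_bound
  have hss : ∀ᵐ p ∂(rteMeasure Ω), 0 ≤ σs p.1 ∧ σs p.1 ≤ σs_hi := by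
    rw [hμdef]; exact ae_fst_prod hσs_bound
  -- integrability facts
  have hfsq : Integrable (fun p => f p ^ 2) (rteMeasure Ω) := hf2.integrable_sq
  have husq : Integrable (fun p => u p ^ 2) (rteMeasure Ω) := hu.integrable_sq
  have hdmem : MemLp (fun p => u p - f p) 2 (rteMeasure Ω) := hu.sub hf2
  have hdsq : Integrable (fun p => (u p - f p) ^ 2) (rteMeasure Ω) := hdmem.integrable_sq
  have hfd : Integrable (fun p => f p * (u p - f p)) (rteMeasure Ω) :=
    integrable_mul_of_memL2 hf2 hdmem
  have hasq : Integrable (fun p => σa p.1 * f p ^ 2) (rteMeasure Ω) := by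
    refine Integrable.mono' (hfsq.const_mul σa_hi)
      (((hσa_meas.comp measurable_fst).mul (hf.pow_const 2)).aestronglyMeasurable) ?_
    filter_upwards [hsa] with p hp
    rw [Real.norm_eq_abs, abs_mul, abs_of_nonneg (sq_nonneg (f p))]
    have : |σa p.1| ≤ σa_hi := abs_le.mpr ⟨by linarith [hp.1], hp.2⟩
    exact mul_le_mul_of_nonneg_right this (sq_nonneg _)
  have hssq : Integrable (fun p => σs p.1 * f p ^ 2) (rteMeasure Ω) := by
    refine Integrable.mono' (hfsq.const_mul σs_hi)
      (((hσs_meas.comp measurable_fst).mul (hf.pow_const 2)).aestronglyMeasurable) ?_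
    filter_upwards [hss] with p hp
    rw [Real.norm_eq_abs, abs_mul, abs_of_nonneg (sq_nonneg (f p))]
    have : |σs p.1| ≤ σs_hi := abs_le.mpr ⟨by linarith [hp.1], hp.2⟩
    exact mul_le_mul_of_nonneg_right this (sq_nonneg _)
  have hRint : Integrable (fun p => f p * removalK Φ σa σs f p) (rteMeasure Ω) := by
    refine Integrable.congr (hfd.div_const Δt) ?_
    filter_upwards [heqf] with p hp
    have : u p - f p = Δt * removalK Φ σa σs f p := by linarith
    rw [this]
    field_simp
  have hI2int : Integrable (fun p => σs p.1 * (f p ^ 2 - f p * scatK Φ f p))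
      (rteMeasure Ω) := by
    have he : (fun p => σs p.1 * (f p ^ 2 - f p * scatK Φ f p))
        = fun p => f p * removalK Φ σa σs f p - σa p.1 * f p ^ 2 := by
      funext p; simp only [removalK]; ring
    rw [he]
    exact hRint.sub hasq
  have hWK : Integrable (fun p => σs p.1 * (f p * scatK Φ f p)) (rteMeasure Ω) := by
    have he : (fun p => σs p.1 * (f p * scatK Φ f p))
        = fun p => σs p.1 * f p ^ 2 - σs p.1 * (f p ^ 2 - f p * scatK Φ f p) := by
      funext p; ring
    rw [he]
    exact hssq.sub hI2int
  -- the kernel inequality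
  have hker : (∫ p, σs p.1 * (f p * scatK Φ f p) ∂(rteMeasure Ω)) ≤
      ∫ p, σs p.1 * f p ^ 2 ∂(rteMeasure Ω) := by
    rw [hμdef]
    rw [hμdef] at hf2
    exact kernel_ineq Φ hΦmeas hΦpos hΦsymm hΦnorm _ σs hσs_meas σs_hi
      hσs_hi_pos.le hσs_bound f hf hf2
  -- nonnegativity of the scattering part
  have hT2 : 0 ≤ ∫ p, σs p.1 * (f p ^ 2 - f p * scatK Φ f p) ∂(rteMeasure Ω) := by
    have he : (fun p => σs p.1 * (f p ^ 2 - f p * scatK Φ f p))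
        = fun p => σs p.1 * f p ^ 2 - σs p.1 * (f p * scatK Φ f p) := by
      funext p; ring
    rw [he, integral_sub hssq hWK, sub_nonneg]
    exact hker
  -- absorption part
  have hT1 : σa_lo * ∫ p, f p ^ 2 ∂(rteMeasure Ω)
      ≤ ∫ p, σa p.1 * f p ^ 2 ∂(rteMeasure Ω) := by
    rw [← integral_const_mul]
    refine integral_mono_ae (hfsq.const_mul σa_lo) hasq ?_
    filter_upwards [hsa] with p hp
    exact mul_le_mul_of_nonneg_right hp.1 (sq_nonneg _)
  -- the splitting identity
  have hsplit : (∫ p, f p * removalK Φ σa σs f p ∂(rteMeasure Ω))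
      = (∫ p, σa p.1 * f p ^ 2 ∂(rteMeasure Ω))
        + ∫ p, σs p.1 * (f p ^ 2 - f p * scatK Φ f p) ∂(rteMeasure Ω) := by
    rw [← integral_add hasq hI2int]
    refine integral_congr_ae (Filter.Eventually.of_forall fun p => ?_)
    simp only [removalK]; ring
  have hRlow : σa_lo * (∫ p, f p ^ 2 ∂(rteMeasure Ω))
      ≤ ∫ p, f p * removalK Φ σa σs f p ∂(rteMeasure Ω) := by
    rw [hsplit]; linarith
  -- cross term
  have hcross : (∫ p, f p * (u p - f p) ∂(rteMeasure Ω))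
      = Δt * ∫ p, f p * removalK Φ σa σs f p ∂(rteMeasure Ω) := by
    rw [← integral_const_mul]
    refine integral_congr_ae ?_
    filter_upwards [heqf] with p hp
    have : u p - f p = Δt * removalK Φ σa σs f p := by linarith
    rw [this]; ring
  -- energy identity
  have hiden : (∫ p, u p ^ 2 ∂(rteMeasure Ω))
      = (∫ p, f p ^ 2 ∂(rteMeasure Ω))
        + 2 * (∫ p, f p * (u p - f p) ∂(rteMeasure Ω))
        + ∫ p, (u p - f p) ^ 2 ∂(rteMeasure Ω) := by
    have hus : Integrable (fun p => u p ^ 2 - f p ^ 2) (rteMeasure Ω) := husq.sub hfsq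
    have hus2 : Integrable (fun p => u p ^ 2 - f p ^ 2 - (u p - f p) ^ 2)
        (rteMeasure Ω) := hus.sub hdsq
    have h3 : (∫ p, (u p ^ 2 - f p ^ 2 - (u p - f p) ^ 2) ∂(rteMeasure Ω))
        = 2 * ∫ p, f p * (u p - f p) ∂(rteMeasure Ω) := by
      rw [← integral_const_mul]
      refine integral_congr_ae (Filter.Eventually.of_forall fun p => ?_)
      ring
    have h4 : (∫ p, (u p ^ 2 - f p ^ 2 - (u p - f p) ^ 2) ∂(rteMeasure Ω))
        = (∫ p, u p ^ 2 ∂(rteMeasure Ω)) - (∫ p, f p ^ 2 ∂(rteMeasure Ω))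
          - ∫ p, (u p - f p) ^ 2 ∂(rteMeasure Ω) := by
      rw [integral_sub hus hdsq, integral_sub husq hfsq]
    have := h4.symm.trans h3
    linarith
  -- replace util-integrals by f-integrals
  have hAeq : (∫ p, util p ^ 2 ∂(rteMeasure Ω)) = ∫ p, f p ^ 2 ∂(rteMeasure Ω) := by
    refine integral_congr_ae ?_
    filter_upwards [hf_ae] with p hp
    rw [hp]
  have hBeq : (∫ p, (util p - u p) ^ 2 ∂(rteMeasure Ω))
      = ∫ p, (u p - f p) ^ 2 ∂(rteMeasure Ω) := by
    refine integral_congr_ae ?_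
    filter_upwards [hf_ae] with p hp
    rw [hp]; ring
  have hfsq_nonneg : 0 ≤ ∫ p, f p ^ 2 ∂(rteMeasure Ω) :=
    integral_nonneg fun p => sq_nonneg _
  have hdsq_nonneg : 0 ≤ ∫ p, (u p - f p) ^ 2 ∂(rteMeasure Ω) :=
    integral_nonneg fun p => sq_nonneg _
  have hmain : (∫ p, f p ^ 2 ∂(rteMeasure Ω)) + (∫ p, (u p - f p) ^ 2 ∂(rteMeasure Ω))
      + 2 * Δt * σa_lo * (∫ p, f p ^ 2 ∂(rteMeasure Ω))
      ≤ ∫ p, u p ^ 2 ∂(rteMeasure Ω) := by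
    rw [hiden, hcross]
    nlinarith [hRlow, hΔt]
  constructor
  · rw [hAeq, hBeq]
    exact hmain
  · have hAC : (∫ p, f p ^ 2 ∂(rteMeasure Ω)) ≤ ∫ p, u p ^ 2 ∂(rteMeasure Ω) := by
      nlinarith [hmain, hdsq_nonneg, mul_nonneg (mul_nonneg (mul_nonneg (by norm_num : (0:ℝ) ≤ 2) hΔt.le) hσa_lo_pos.le) hfsq_nonneg]
    have hconv : ∀ (g : E3 × S2 → ℝ), Integrable (fun p => g p ^ 2) (rteMeasure Ω) →
        (∫⁻ p, ‖g p‖ₑ ^ (2 : ℝ≥0∞).toReal ∂(rteMeasure Ω))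
          = ENNReal.ofReal (∫ p, g p ^ 2 ∂(rteMeasure Ω)) := by
      intro g hg
      rw [ofReal_integral_eq_lintegral_ofReal hg
        (Filter.Eventually.of_forall fun p => sq_nonneg _)]
      refine lintegral_congr fun p => ?_
      rw [ENNReal.toReal_ofNat, show ((2:ℝ) = ((2:ℕ):ℝ)) by norm_num,
        ENNReal.rpow_natCast]
      rw [show (‖g p‖ₑ) = ENNReal.ofReal |g p| by
        rw [← Real.norm_eq_abs, ofReal_norm]]
      rw [← ENNReal.ofReal_pow (abs_nonneg _), sq_abs]
    rw [eLpNorm_congr_ae hf_ae,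
      eLpNorm_eq_lintegral_rpow_enorm_toReal two_ne_zero ENNReal.ofNat_ne_top,
      eLpNorm_eq_lintegral_rpow_enorm_toReal two_ne_zero ENNReal.ofNat_ne_top]
    refine ENNReal.rpow_le_rpow ?_ (by positivity)
    rw [hconv f hfsq, hconv u husq]
    exact ENNReal.ofReal_le_ofReal hAC
end
end
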